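/- Let λ ∈ [0, 1/2] and let Φ' = √λ|00⟩ + √(1−λ)|11⟩ in C^2 ⊗ C^2. Let Λ = (1/2)(|0011⟩ − |0110⟩ − |1001⟩ + |1100⟩) in (C^2)^{⊗4}, where Φ' ⊗ Φ' is regrouped with factors ordered 1,2,3,4. Then |⟨Λ, Φ' ⊗ Φ'⟩|² = λ(1 − λ). Moreover, for any single-qubit unitaries V, W and Φ = (V ⊗ W)Φ', also |⟨Λ, Φ ⊗ Φ⟩|² = λ(1 − λ). -/

import Mathlib

open scoped Matrix Kronecker

noncomputable section

abbrev Qubit := EuclideanSpace ℂ (Fin 2)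
abbrev TwoQubit := EuclideanSpace ℂ (Fin 2 × Fin 2)
abbrev Idx4 := Fin 2 × Fin 2 × Fin 2 × Fin 2
abbrev FourQubit := EuclideanSpace ℂ Idx4

/-- Elementary tensor of two qubit vectors. -/
def tp (a b : Qubit) : TwoQubit := WithLp.toLp 2 fun p : Fin 2 × Fin 2 => a p.1 * b p.2

/-- Standard basis of `ℂ²`. -/
def e (i : Fin 2) : Qubit := EuclideanSpace.single i 1

/-- Standard product basis vector `|abcd⟩` of four qubits. -/
def ket4 (a b c d : Fin 2) : FourQubit := EuclideanSpace.single (a, b, c, d) 1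

/-- The state `Λ = Ψ₋⁽¹³⁾ ⊗ Ψ₋⁽²⁴⁾ = (1/2)(|0011⟩ − |0110⟩ − |1001⟩ + |1100⟩)`. -/
def Lam : FourQubit :=
  (1 / 2 : ℂ) • (ket4 0 0 1 1 - ket4 0 1 1 0 - ket4 1 0 0 1 + ket4 1 1 0 0)

/-- The operator `A ⊗ B ⊗ C ⊗ D` acting factorwise on four qubits. -/
def kron4 (A B C D : Matrix (Fin 2) (Fin 2) ℂ) : Matrix Idx4 Idx4 ℂ :=
  Matrix.of fun p q =>
    A p.1 q.1 * B p.2.1 q.2.1 * C p.2.2.1 q.2.2.1 * D p.2.2.2 q.2.2.2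

/-- The double-swap unitary permuting the tensor factors by `(1 2)(3 4)`:
`(Sv)(a,b,c,d) = v(b,a,d,c)`. -/
def dblSwap : Matrix Idx4 Idx4 ℂ :=
  Matrix.of fun p q => if q = (p.2.1, p.1, p.2.2.2, p.2.2.1) then 1 else 0

/-- The tensor `u ⊗ v` of two two-qubit states, viewed in `(ℂ²)^{⊗4}` with the
first copy on factors 1,2 and the second on factors 3,4. -/
def tpp (u v : TwoQubit) : FourQubit :=
  WithLp.toLp 2 fun p : Idx4 => u (p.1, p.2.1) * v (p.2.2.1, p.2.2.2)

lemma inner_Lam_tpp (u : TwoQubit) : (inner ℂ Lam (tpp u u) : ℂ)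
    = u (0,0) * u (1,1) - u (0,1) * u (1,0) := by
  simp only [Lam, ket4, tpp, PiLp.inner_apply, RCLike.inner_apply]
  simp [Fintype.sum_prod_type, Fin.sum_univ_two, EuclideanSpace.single_apply,
    PiLp.smul_apply, PiLp.add_apply, PiLp.sub_apply, Prod.ext_iff, map_ofNat]
  ring

lemma norm_det_unitary {A : Matrix (Fin 2) (Fin 2) ℂ}
    (hA : A ∈ Matrix.unitaryGroup (Fin 2) ℂ) : ‖A.det‖ = 1 := by
  have h := (Matrix.det_of_mem_unitary hA).1
  have h2 : ‖A.det‖ * ‖A.det‖ = 1 := by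
    calc ‖A.det‖ * ‖A.det‖ = ‖star A.det * A.det‖ := by rw [norm_mul, norm_star]
    _ = ‖(1 : ℂ)‖ := by rw [h]
    _ = 1 := norm_one
  nlinarith [norm_nonneg A.det]

/-- For `λ ∈ [0, 1/2]` and `Φ' = √λ|00⟩ + √(1−λ)|11⟩`,
`|⟨Λ, Φ' ⊗ Φ'⟩|² = λ(1−λ)`, and the same holds for `Φ = (V ⊗ W)Φ'` for any
single-qubit unitaries `V`, `W`. -/
theorem stmt_18 (l : ℝ) (hl0 : 0 ≤ l) (hl : l ≤ 1 / 2)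
    (Φ' : TwoQubit)
    (hΦ' : Φ' = (Real.sqrt l : ℂ) • tp (e 0) (e 0)
        + (Real.sqrt (1 - l) : ℂ) • tp (e 1) (e 1)) :
    ‖(inner ℂ Lam (tpp Φ' Φ') : ℂ)‖ ^ 2 = l * (1 - l)
      ∧ ∀ V W : Matrix (Fin 2) (Fin 2) ℂ,
          V ∈ Matrix.unitaryGroup (Fin 2) ℂ → W ∈ Matrix.unitaryGroup (Fin 2) ℂ →
          ∀ Φ : TwoQubit, Φ = Matrix.toEuclideanLin (V ⊗ₖ W) Φ' →
            ‖(inner ℂ Lam (tpp Φ Φ) : ℂ)‖ ^ 2 = l * (1 - l) := by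
  have h1l : (0 : ℝ) ≤ 1 - l := by linarith
  set s : ℝ := Real.sqrt l with hs
  set t : ℝ := Real.sqrt (1 - l) with ht
  have h00 : Φ' (0,0) = (s : ℂ) := by
    rw [hΦ']; simp [tp, e, EuclideanSpace.single_apply]
  have h11 : Φ' (1,1) = (t : ℂ) := by
    rw [hΦ']; simp [tp, e, EuclideanSpace.single_apply]
  have h01 : Φ' (0,1) = 0 := by
    rw [hΦ']; simp [tp, e, EuclideanSpace.single_apply]
  have h10 : Φ' (1,0) = 0 := by
    rw [hΦ']; simp [tp, e, EuclideanSpace.single_apply]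
  have hst : ‖((s : ℂ) * (t : ℂ))‖ ^ 2 = l * (1 - l) := by
    rw [norm_mul, Complex.norm_real, Complex.norm_real, Real.norm_eq_abs,
      Real.norm_eq_abs, abs_of_nonneg (Real.sqrt_nonneg _),
      abs_of_nonneg (Real.sqrt_nonneg _),
      mul_pow, Real.sq_sqrt hl0, Real.sq_sqrt h1l]
  constructor
  · rw [inner_Lam_tpp, h00, h11, h01, h10, mul_zero, sub_zero, hst]
  · intro V W hV hW Φ hΦ
    have hΦv : ∀ a b : Fin 2,
        Φ (a, b) = (s : ℂ) * V a 0 * W b 0 + (t : ℂ) * V a 1 * W b 1 := by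
      intro a b
      have : Φ (a, b) = ((V ⊗ₖ W) *ᵥ fun p => Φ' p) (a, b) := by
        rw [hΦ, Matrix.toEuclideanLin_apply]
      rw [this]
      simp only [Matrix.mulVec, dotProduct, Fintype.sum_prod_type,
        Fin.sum_univ_two, Matrix.kroneckerMap_apply]
      rw [h00, h11, h01, h10]
      ring
    rw [inner_Lam_tpp, hΦv 0 0, hΦv 1 1, hΦv 0 1, hΦv 1 0]
    have hexp : ((s : ℂ) * V 0 0 * W 0 0 + (t : ℂ) * V 0 1 * W 0 1) *
          ((s : ℂ) * V 1 0 * W 1 0 + (t : ℂ) * V 1 1 * W 1 1) -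
        ((s : ℂ) * V 0 0 * W 1 0 + (t : ℂ) * V 0 1 * W 1 1) *
          ((s : ℂ) * V 1 0 * W 0 0 + (t : ℂ) * V 1 1 * W 0 1)
        = (s : ℂ) * (t : ℂ) * (V.det * W.det) := by
      rw [Matrix.det_fin_two, Matrix.det_fin_two]; ring
    have hn : ‖(s : ℂ) * (t : ℂ) * (V.det * W.det)‖ = ‖(s : ℂ) * (t : ℂ)‖ := by
      simp [norm_mul, norm_det_unitary hV, norm_det_unitary hW]
    rw [hexp, hn, hst]
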